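/- Safety of combined pruning: for nonnegative unit vectors x, y in ℝ^d with time difference Δt ≥ 0, decay λ ≥ 0, and any index j, if sim_Δt(x,y) ≥ θ then both (⟨x̃_j, ỹ_j⟩ + ‖x̂_j‖·‖ŷ_j‖)·e^{−λΔt} ≥ θ and min{‖x̂_j‖, ⟨x̂_j, m⟩}·e^{−λΔt} + ⟨x̃_j, y⟩·e^{−λΔt} ≥ θ, where m is any coordinatewise upper bound of y. -/

import Mathlib

open scoped BigOperators

/-- The prefix of `x` consisting of its first `j` coordinates (others zeroed). -/
noncomputable def prefixVec {d : ℕ} (j : ℕ) (x : EuclideanSpace ℝ (Fin d)) :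
    EuclideanSpace ℝ (Fin d) :=
  WithLp.toLp 2 (fun k : Fin d => if (k : ℕ) < j then x k else 0)

lemma prefix_orth {d : ℕ} (j : ℕ) (x y : EuclideanSpace ℝ (Fin d)) :
    (inner ℝ (prefixVec j x) (y - prefixVec j y) : ℝ) = 0 := by
  simp only [PiLp.inner_apply, RCLike.inner_apply, conj_trivial]
  apply Finset.sum_eq_zero
  intro k _
  by_cases h : (k : ℕ) < j <;>
    simp [prefixVec, h, PiLp.sub_apply]

theorem sssj_combined_pruning_safe {d : ℕ} (x y m : EuclideanSpace ℝ (Fin d))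
    (j : ℕ) (dt lam θ : ℝ)
    (hx : ‖x‖ = 1) (hy : ‖y‖ = 1)
    (hxpos : ∀ k, 0 ≤ x k) (hypos : ∀ k, 0 ≤ y k)
    (hm : ∀ k, y k ≤ m k)
    (hdt : 0 ≤ dt) (hlam : 0 ≤ lam) (hθ : 0 < θ)
    (hsim : (inner ℝ x y : ℝ) * Real.exp (-lam * dt) ≥ θ) :
    ((inner ℝ (x - prefixVec j x) (y - prefixVec j y) : ℝ) +
        ‖prefixVec j x‖ * ‖prefixVec j y‖) * Real.exp (-lam * dt) ≥ θ ∧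
    min ‖prefixVec j x‖ (inner ℝ (prefixVec j x) m : ℝ) * Real.exp (-lam * dt) +
        (inner ℝ (x - prefixVec j x) y : ℝ) * Real.exp (-lam * dt) ≥ θ := by
  have hexp : (0:ℝ) < Real.exp (-lam * dt) := Real.exp_pos _
  set px := prefixVec j x with hpx
  set py := prefixVec j y with hpy
  have horth1 : (inner ℝ px (y - py) : ℝ) = 0 := prefix_orth j x y
  have horth2 : (inner ℝ (x - px) py : ℝ) = 0 := by
    rw [real_inner_comm]
    simpa [real_inner_comm, hpx, hpy] using prefix_orth j y x
  have hdec1 : (inner ℝ x y : ℝ) =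
      (inner ℝ (x - px) (y - py) : ℝ) + (inner ℝ px py : ℝ) := by
    have h : (inner ℝ x y : ℝ) = inner ℝ (x - px + px) (y - py + py) := by
      norm_num
    rw [h, inner_add_left, inner_add_right, inner_add_right, horth1, horth2]
    ring
  have hcs : (inner ℝ px py : ℝ) ≤ ‖px‖ * ‖py‖ := real_inner_le_norm px py
  constructor
  · calc θ ≤ (inner ℝ x y : ℝ) * Real.exp (-lam * dt) := hsim
    _ ≤ ((inner ℝ (x - px) (y - py) : ℝ) + ‖px‖ * ‖py‖) * Real.exp (-lam * dt) := by
        apply mul_le_mul_of_nonneg_right _ hexp.le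
        rw [hdec1]; linarith
  · have hdec2 : (inner ℝ x y : ℝ) = (inner ℝ px y : ℝ) + (inner ℝ (x - px) y : ℝ) := by
      rw [← inner_add_left]; norm_num
    have h1 : (inner ℝ px y : ℝ) ≤ ‖px‖ := by
      calc (inner ℝ px y : ℝ) ≤ ‖px‖ * ‖y‖ := real_inner_le_norm px y
      _ = ‖px‖ := by rw [hy, mul_one]
    have h2 : (inner ℝ px y : ℝ) ≤ (inner ℝ px m : ℝ) := by
      simp only [PiLp.inner_apply, RCLike.inner_apply, conj_trivial]
      apply Finset.sum_le_sum
      intro k _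
      apply mul_le_mul_of_nonneg_right (hm k)
      by_cases h : (k : ℕ) < j <;> simp [hpx, prefixVec, h, hxpos k]
    have h3 : (inner ℝ px y : ℝ) ≤ min ‖px‖ (inner ℝ px m : ℝ) := le_min h1 h2
    calc θ ≤ (inner ℝ x y : ℝ) * Real.exp (-lam * dt) := hsim
    _ = (inner ℝ px y : ℝ) * Real.exp (-lam * dt) +
        (inner ℝ (x - px) y : ℝ) * Real.exp (-lam * dt) := by rw [hdec2]; ring
    _ ≤ min ‖px‖ (inner ℝ px m : ℝ) * Real.exp (-lam * dt) +
        (inner ℝ (x - px) y : ℝ) * Real.exp (-lam * dt) := by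
        apply add_le_add_left
        exact mul_le_mul_of_nonneg_right h3 hexp.le
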